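/- arXiv:math-ph/0703013 — 4 statements merged into one kernel-verified Lean document; each statement's English description precedes it below -/
import Mathlib

section
/- Let S₁,…,S_d and T₁,…,T_d be two families of isometries on Hilbert spaces satisfying the Cuntz relations S_k* S_l = δ_{kl} 1 and ∑_k S_k S_k* = 1 (and similarly for T). Then in the tensor product, the operator V = ∑_{j=1}^d S_j* ⊗ T_j is a unitary: V V* = V* V = 1. -/
/-- If `S₁,…,S_d` and `T₁,…,T_d` are Cuntz families on Hilbert spaces
`HL`, `HR`, then on the Hilbert tensor product `H` (presented via a bilinear map `ι`
with total range and factorizing inner ℂ product), the operator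
`V = ∑ j, S j* ⊗ T j` is a unitary. -/
theorem stmt1 {HL HR H : Type*}
    [NormedAddCommGroup HL] [InnerProductSpace ℂ HL] [CompleteSpace HL]
    [NormedAddCommGroup HR] [InnerProductSpace ℂ HR] [CompleteSpace HR]
    [NormedAddCommGroup H] [InnerProductSpace ℂ H] [CompleteSpace H]
    (ι : HL →ₗ[ℂ] HR →ₗ[ℂ] H)
    (hdense : Dense (Submodule.span ℂ {v : H | ∃ x y, ι x y = v} : Set H))
    (hinner : ∀ (x x' : HL) (y y' : HR),
      (inner ℂ (ι x y) (ι x' y') : ℂ) = (inner ℂ x x' : ℂ) * (inner ℂ y y' : ℂ))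
    (d : ℕ) (S : Fin d → (HL →L[ℂ] HL)) (T : Fin d → (HR →L[ℂ] HR))
    (hS1 : ∀ i j, star (S i) * S j = if i = j then 1 else 0)
    (hS2 : ∑ j, S j * star (S j) = 1)
    (hT1 : ∀ i j, star (T i) * T j = if i = j then 1 else 0)
    (hT2 : ∑ j, T j * star (T j) = 1)
    (V : H →L[ℂ] H)
    (hV : ∀ (x : HL) (y : HR), V (ι x y) = ∑ j, ι (star (S j) x) (T j y)) :
    V * star V = 1 ∧ star V * V = 1 := by
  set E : Set H := {v : H | ∃ x y, ι x y = v} with hE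
  -- key inner-product identity on elementary tensors
  have key : ∀ (x x' : HL) (y y' : HR),
      (inner ℂ (V (ι x y)) (V (ι x' y')) : ℂ) = inner ℂ (ι x y) (ι x' y') := by
    intro x x' y y'
    rw [hV, hV, sum_inner]
    have hterm : ∀ j k : Fin d,
        (inner ℂ (ι ((star (S j)) x) ((T j) y)) (ι ((star (S k)) x') ((T k) y')) : ℂ)
          = if j = k then (inner ℂ x (((S j) * star (S j)) x') : ℂ) * (inner ℂ y y' : ℂ)
            else 0 := by
      intro j k
      rw [hinner]
      have h1 : (inner ℂ ((star (S j)) x) ((star (S k)) x') : ℂ)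
          = inner ℂ x (((S j) * star (S k)) x') := by
        rw [ContinuousLinearMap.mul_apply, ContinuousLinearMap.star_eq_adjoint,
          ContinuousLinearMap.adjoint_inner_left]
      have h2 : (inner ℂ ((T j) y) ((T k) y') : ℂ)
          = inner ℂ y ((star (T j) * T k) y') := by
        rw [ContinuousLinearMap.mul_apply, ContinuousLinearMap.star_eq_adjoint,
          ContinuousLinearMap.adjoint_inner_right]
      rw [h1, h2, hT1]
      split_ifs with h
      · subst h; simp
      · simp
    simp_rw [inner_sum, hterm, Finset.sum_ite_eq, Finset.mem_univ, if_true]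
    rw [hinner x x' y y', ← Finset.sum_mul]
    congr 1
    simp_rw [ContinuousLinearMap.mul_apply]
    rw [← inner_sum]
    congr 1
    calc ∑ j, (S j) ((star (S j)) x') = (∑ j, S j * star (S j)) x' := by
          simp [ContinuousLinearMap.sum_apply]
      _ = x' := by rw [hS2]; rfl
  -- extend the identity to all of H
  have hiso : ∀ u w : H, (inner ℂ (V u) (V w) : ℂ) = inner ℂ u w := by
    -- first: u elementary, w arbitrary
    have step1 : ∀ u ∈ E, ∀ w : H, (inner ℂ (V u) (V w) : ℂ) = inner ℂ u w := by
      rintro u ⟨x, y, rfl⟩ w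
      have hfg : (fun w : H => (inner ℂ (V (ι x y)) (V w) : ℂ))
          = fun w => inner ℂ (ι x y) w := by
        apply Continuous.ext_on hdense
        · exact (continuous_const.inner (V.continuous))
        · exact (continuous_const.inner continuous_id)
        · intro w hw
          induction hw using Submodule.span_induction with
          | mem v hv =>
              obtain ⟨x', y', rfl⟩ := hv
              exact key x x' y y'
          | zero => simp
          | add a b ha hb hpa hpb => simp only [map_add, inner_add_right, hpa, hpb]
          | smul c a ha hpa => simp only [map_smul, inner_smul_right, hpa]
      exact congrFun hfg w
    intro u w
    have hfg : (fun u : H => (inner ℂ (V u) (V w) : ℂ)) = fun u => inner ℂ u w := by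
      apply Continuous.ext_on hdense
      · exact ((V.continuous).inner continuous_const)
      · exact (continuous_id.inner continuous_const)
      · intro u hu
        induction hu using Submodule.span_induction with
        | mem v hv => exact step1 v hv w
        | zero => simp
        | add a b ha hb hpa hpb => simp only [map_add, inner_add_left, hpa, hpb]
        | smul c a ha hpa => simp only [map_smul, inner_smul_left, hpa]
    exact congrFun hfg u
  -- star V * V = 1
  have h1 : star V * V = 1 := by
    ext u
    apply ext_inner_right ℂ
    intro w
    rw [ContinuousLinearMap.mul_apply, ContinuousLinearMap.star_eq_adjoint,
      ContinuousLinearMap.adjoint_inner_left, hiso, ContinuousLinearMap.one_apply]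
  -- V is an isometry, hence has closed range
  have hiso' : ∀ x y : H, (inner ℂ ((V.toLinearMap) x) ((V.toLinearMap) y) : ℂ) = inner ℂ x y := hiso
  have hclosed : IsClosed (Set.range (V : H → H)) := by
    have := ((V.toLinearMap.isometryOfInner hiso').isometry).isClosedEmbedding.isClosed_range
    simpa [LinearMap.coe_isometryOfInner] using this
  -- range of V contains all elementary tensors
  have hsubE : E ⊆ Set.range (V : H → H) := by
    rintro v ⟨x, y, rfl⟩
    refine ⟨∑ j, ι ((S j) x) ((star (T j)) y), ?_⟩
    rw [map_sum]
    have hterm : ∀ j : Fin d,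
        V (ι ((S j) x) ((star (T j)) y)) = ι x (((T j) * star (T j)) y) := by
      intro j
      rw [hV]
      have : ∀ k : Fin d, ι ((star (S k)) ((S j) x)) ((T k) ((star (T j)) y))
          = if k = j then ι x (((T j) * star (T j)) y) else 0 := by
        intro k
        have : (star (S k)) ((S j) x) = (star (S k) * S j) x := rfl
        rw [this, hS1]
        split_ifs with h
        · subst h; simp [ContinuousLinearMap.mul_apply]
        · simp
      simp_rw [this, Finset.sum_ite_eq', Finset.mem_univ, if_true]
    simp_rw [hterm]
    calc ∑ j, ι x (((T j) * star (T j)) y) = ι x ((∑ j, T j * star (T j)) y) := by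
          simp [ContinuousLinearMap.sum_apply]
      _ = ι x y := by rw [hT2]; rfl
  have hsurj : Function.Surjective (V : H → H) := by
    have hsub : (Submodule.span ℂ E : Set H) ⊆ Set.range (V : H → H) := by
      have : Submodule.span ℂ E ≤ LinearMap.range (V : H →ₗ[ℂ] H) :=
        Submodule.span_le.mpr hsubE
      intro z hz
      exact this hz
    have hd : Dense (Set.range (V : H → H)) := hdense.mono hsub
    intro u
    have : u ∈ Set.range (V : H → H) := by
      have := hd.closure_eq
      rw [hclosed.closure_eq] at this
      rw [this]; trivial
    exact this
  have h2 : V * star V = 1 := by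
    ext u
    obtain ⟨w, rfl⟩ := hsurj u
    have hw : (star V) (V w) = w := by
      have := congrFun (congrArg (fun A : H →L[ℂ] H => (A : H → H)) h1) w
      simpa [ContinuousLinearMap.mul_apply] using this
    simp [ContinuousLinearMap.mul_apply, hw]
  exact ⟨h2, h1⟩
end

section
/- Let π be a representation of a C*-algebra A on H, W a unitary on H, and Ω ∈ H a vector cyclic for π(A) and fixed by W (WΩ = Ω). Suppose a bounded operator P commutes with π(A) and with W, and that for every Q ∈ A the weak limit lim_k W^k π(Q) W^{-k} exists and equals φ(Q)·1, where φ is the vector state of Ω. Then PΩ = ⟨Ω, PΩ⟩ Ω, and hence P = ⟨Ω, PΩ⟩ · 1. -/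
open Filter

/-- Let `π` be a representation of a C*-algebra `A` on `H`, `W` a unitary
fixing a cyclic unit vector `Ω`, and suppose `P` commutes with `π(A)` and `W`, and that
the weak limits `lim_k W^k π(Q) W^{-k} = φ(Q)·1` hold, `φ` being the vector state of `Ω`.
Then `P Ω = ⟨Ω, P Ω⟩ Ω` and `P = ⟨Ω, P Ω⟩ · 1`. -/
theorem stmt5 {A H : Type*}
    [NormedRing A] [StarRing A] [CStarRing A] [NormedAlgebra ℂ A] [CompleteSpace A]
    [StarModule ℂ A]
    [NormedAddCommGroup H] [InnerProductSpace ℂ H] [CompleteSpace H]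
    (π : A →⋆ₐ[ℂ] (H →L[ℂ] H)) (Ω : H) (hΩ : ‖Ω‖ = 1)
    (hcyclic : Dense (Submodule.span ℂ (Set.range fun a : A => π a Ω) : Set H))
    (W : H →L[ℂ] H) (hW : W ∈ unitary (H →L[ℂ] H)) (hWΩ : W Ω = Ω)
    (P : H →L[ℂ] H) (hPπ : ∀ a : A, Commute P (π a)) (hPW : Commute P W)
    (φ : A → ℂ) (hφ : ∀ a : A, φ a = (inner ℂ Ω (π a Ω) : ℂ))
    (hmix : ∀ (Q : A) (x y : H),
      Tendsto (fun k : ℕ => (inner ℂ x ((W ^ k * π Q * star (W ^ k)) y) : ℂ)) atTop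
        (nhds (φ Q * (inner ℂ x y : ℂ)))) :
    P Ω = (inner ℂ Ω (P Ω) : ℂ) • Ω ∧ P = (inner ℂ Ω (P Ω) : ℂ) • 1 := by
  -- star W fixes Ω
  have hsWΩ : star W Ω = Ω := by
    conv_lhs => rw [← hWΩ]
    have : (star W * W) Ω = Ω := by rw [(Unitary.mem_iff.mp hW).1]; simp
    simpa using this
  -- W fixes ξ := P Ω
  set ξ := P Ω with hξ
  have hWξ : W ξ = ξ := by
    have := congrArg (fun T : H →L[ℂ] H => T Ω) hPW.symm.eq
    simpa [hξ, hWΩ] using this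
  have hsWξ : star W ξ = ξ := by
    conv_lhs => rw [← hWξ]
    have : (star W * W) ξ = ξ := by rw [(Unitary.mem_iff.mp hW).1]; simp
    simpa using this
  have hsWkΩ : ∀ k : ℕ, (star (W ^ k)) Ω = Ω := by
    intro k
    rw [star_pow]
    induction k with
    | zero => simp
    | succ n ih => rw [pow_succ]; simp [ContinuousLinearMap.mul_apply, ih, hsWΩ]
  have hWkξ : ∀ k : ℕ, ∀ v : H, (inner ℂ ξ ((W ^ k) v) : ℂ) = inner ℂ ξ v := by
    intro k v
    rw [← ContinuousLinearMap.adjoint_inner_left]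
    congr 1
    rw [← ContinuousLinearMap.star_eq_adjoint, star_pow]
    induction k with
    | zero => simp
    | succ n ih => rw [pow_succ]; simp [ContinuousLinearMap.mul_apply, ih, hsWξ]
  -- key: ⟨ξ, π Q Ω⟩ = φ Q * ⟨ξ, Ω⟩
  have key : ∀ Q : A, (inner ℂ ξ (π Q Ω) : ℂ) = φ Q * inner ℂ ξ Ω := by
    intro Q
    have hconst : (fun k : ℕ => (inner ℂ ξ ((W ^ k * π Q * star (W ^ k)) Ω) : ℂ))
        = fun _ => (inner ℂ ξ (π Q Ω) : ℂ) := by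
      funext k
      simp only [ContinuousLinearMap.mul_apply, hsWkΩ k, hWkξ k]
    have h1 := hmix Q ξ Ω
    rw [hconst] at h1
    exact tendsto_nhds_unique tendsto_const_nhds h1
  set c : ℂ := (inner ℂ Ω ξ : ℂ) with hc
  have hperp : ∀ a : A, (inner ℂ (ξ - c • Ω) (π a Ω) : ℂ) = 0 := by
    intro a
    rw [inner_sub_left, inner_smul_left, key a, hφ a]
    have hcc : (starRingEnd ℂ) c = inner ℂ ξ Ω := by rw [hc, inner_conj_symm]
    rw [hcc]; ring
  have hmain : ξ = c • Ω := by
    have hf : (innerSL ℂ (ξ - c • Ω) : H →L[ℂ] ℂ) = 0 := by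
      apply ContinuousLinearMap.ext_on hcyclic
      rintro x ⟨a, rfl⟩
      simp only [innerSL_apply_apply, ContinuousLinearMap.zero_apply]
      exact hperp a
    have := congrArg (fun f : H →L[ℂ] ℂ => f (ξ - c • Ω)) hf
    simp only [innerSL_apply_apply, ContinuousLinearMap.zero_apply] at this
    have h0 : ξ - c • Ω = 0 := inner_self_eq_zero.mp this
    exact sub_eq_zero.mp h0
  refine ⟨hmain, ?_⟩
  apply ContinuousLinearMap.ext_on hcyclic
  rintro x ⟨a, rfl⟩
  have hcomm := congrArg (fun T : H →L[ℂ] H => T Ω) (hPπ a).eq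
  simp only [ContinuousLinearMap.mul_apply] at hcomm
  simp only [ContinuousLinearMap.smul_apply, ContinuousLinearMap.one_apply]
  rw [hcomm, ← hξ, hmain, map_smul]
end

section
/- Let π be a representation of a C*-algebra B on H containing commuting subalgebras π(O_R) and unitaries, let E_R be a projection, Ω a vector with E_R Ω = Ω, and S an operator with PSP and PS both defined where P is a projection with P ≤ E_R and PΩ = Ω. If ⟨Ω, (PSP − PS)(PS* P − S* P) Ω⟩ = 0 and Ω is separating for the relevant reduced algebra, then PSP = PS. In particular, for isometries S_j in a von Neumann algebra N with support projection considerations as in the paper, v_j := P π(S_j) P satisfies ∑_j v_j v_j* = P (the identity of the reduced space). -/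
/-- Let `S₁,…,S_d` be a Cuntz family on `H`, `P` a projection with
`P Ω = Ω`, and `N` a set of operators for which `Ω` is separating and which contains the
adjoints `(P S_j P − P S_j)*`.  If `⟨Ω, (P S_j P − P S_j)(P S_j* P − S_j* P) Ω⟩ = 0`
for each `j`, then `P S_j P = P S_j`; in particular the compressions `v_j = P S_j P`
satisfy `∑ j, v_j v_j* = P` (the identity of the reduced space). -/
theorem stmt11 {H : Type*}
    [NormedAddCommGroup H] [InnerProductSpace ℂ H] [CompleteSpace H]
    (d : ℕ) (S : Fin d → (H →L[ℂ] H))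
    (hC1 : ∀ i j, star (S i) * S j = if i = j then 1 else 0)
    (hC2 : ∑ j, S j * star (S j) = 1)
    (P : H →L[ℂ] H) (hPsa : star P = P) (hPidem : P * P = P)
    (Ω : H) (hPΩ : P Ω = Ω)
    (N : Set (H →L[ℂ] H))
    (hsep : ∀ T ∈ N, T Ω = 0 → T = 0)
    (hmem : ∀ j, star (P * S j * P - P * S j) ∈ N)
    (hzero : ∀ j, (inner ℂ Ω
        (((P * S j * P - P * S j) * star (P * S j * P - P * S j)) Ω) : ℂ) = 0) :
    (∀ j, P * S j * P = P * S j) ∧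
      ∑ j, (P * S j * P) * star (P * S j * P) = P := by
  have key : ∀ j, P * S j * P = P * S j := by
    intro j
    set T := P * S j * P - P * S j with hT
    have h0 : (inner ℂ Ω (T (star T Ω)) : ℂ) = 0 := by
      have := hzero j
      simpa [hT, ContinuousLinearMap.mul_apply] using this
    have h1 : (inner ℂ (star T Ω) (star T Ω) : ℂ) = 0 := by
      rw [← ContinuousLinearMap.adjoint_inner_left] at h0
      simpa [ContinuousLinearMap.star_eq_adjoint] using h0
    have h2 : star T Ω = 0 := by
      have := inner_self_eq_zero.mp h1
      exact this
    have h3 : star T = 0 := hsep _ (hmem j) h2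
    have h4 : T = 0 := by
      have := congrArg star h3
      simpa using this
    have := sub_eq_zero.mp h4
    exact this
  refine ⟨key, ?_⟩
  have : ∀ j, (P * S j * P) * star (P * S j * P) = P * (S j * star (S j)) * P := by
    intro j
    rw [key j]
    simp only [star_mul, hPsa]
    simp [mul_assoc]
  rw [Finset.sum_congr rfl (fun j _ => this j), ← Finset.sum_mul, ← Finset.mul_sum, hC2,
    mul_one, hPidem]
end

section
/- Let E_R, E_L, E_R', E_L' be projections on a Hilbert space H with E_L' commuting with E_R, and suppose the subspace equality [E_R M_R' Ω] = [E_L M_L' Ω] holds (closed subspaces generated by the reduced commutants applied to Ω), where M_R, M_L are commuting von Neumann algebras, Ω a unit vector, E_R the support projection of the vector state on M_R', E_L that on M_L', and P = E_R E_R' where E_R' projects onto [M_R' Ω]. If the closed span of vectors E_R x y Ω with x ∈ M_R, y ∈ M_L' equals H after applying E_R E_L, then P = E_R E_L. -/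
section helpers
set_option linter.unusedSectionVars false

variable {H : Type*} [NormedAddCommGroup H] [InnerProductSpace ℂ H] [CompleteSpace H]

private lemma stmt15_fixes_closure (E : H →L[ℂ] H) {D : Set H} (h : ∀ x ∈ D, E x = x) :
    ∀ x ∈ closure D, E x = x := by
  have hsub : closure D ⊆ {x | E x = x} :=
    closure_minimal (fun x hx => h x hx) (isClosed_eq E.continuous continuous_id)
  exact fun x hx => hsub hx

private lemma stmt15_comm_of_invariant (E S : H →L[ℂ] H) (C : Set H) (hsa : star E = E)
    (hfix : ∀ x ∈ C, E x = x) (hrng : ∀ v : H, E v ∈ C)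
    (hS : ∀ v ∈ C, S v ∈ C) (hS' : ∀ v ∈ C, (star S) v ∈ C) :
    E * S = S * E := by
  have h1 : E * (S * E) = S * E := by
    ext v
    simp only [ContinuousLinearMap.mul_apply]
    exact hfix _ (hS _ (hrng v))
  have h2 : E * (star S * E) = star S * E := by
    ext v
    simp only [ContinuousLinearMap.mul_apply]
    exact hfix _ (hS' _ (hrng v))
  have h3 : E * (S * E) = E * S := by
    have := congrArg star h2
    simp only [star_mul, star_star, hsa] at this
    rw [mul_assoc] at this
    exact this
  rw [← h1, h3]

end helpers

/-- Let `M_R`, `M_L` be mutually commuting von Neumann algebras on `H`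
with a unit vector `Ω`; let `E_R` (resp. `E_L`) be the support projection of the vector
state on `M_R'` (resp. `M_L'`), i.e. the smallest projection there fixing `Ω`; let
`E_R'` (resp. `E_L'`) be the projection onto the closure of `M_R' Ω` (resp. `M_L' Ω`),
and `P = E_R E_R'`.  Assume `E_L'` commutes with `E_R`, the equality of reduced cyclic
subspaces `[E_R M_R' Ω] = [E_L M_L' Ω]`, and totality of the vectors `x y Ω`
(`x ∈ M_R`, `y ∈ M_L'`).  Then `P = E_R E_L`. -/
theorem stmt15 {H : Type*}
    [NormedAddCommGroup H] [InnerProductSpace ℂ H] [CompleteSpace H]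
    (MR ML : VonNeumannAlgebra H)
    (hcomm : ∀ x ∈ (MR : Set (H →L[ℂ] H)), ∀ y ∈ (ML : Set (H →L[ℂ] H)), x * y = y * x)
    (Ω : H) (hΩ : ‖Ω‖ = 1)
    (ER EL ER' EL' P : H →L[ℂ] H)
    (hERsa : star ER = ER) (hERidem : ER * ER = ER)
    (hELsa : star EL = EL) (hELidem : EL * EL = EL)
    (hER'sa : star ER' = ER') (hER'idem : ER' * ER' = ER')
    (hEL'sa : star EL' = EL') (hEL'idem : EL' * EL' = EL')
    (hERmem : ER ∈ MR.commutant) (hERΩ : ER Ω = Ω)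
    (hERmin : ∀ q ∈ MR.commutant, star q = q → q * q = q → q Ω = Ω → ER * q = ER)
    (hELmem : EL ∈ ML.commutant) (hELΩ : EL Ω = Ω)
    (hELmin : ∀ q ∈ ML.commutant, star q = q → q * q = q → q Ω = Ω → EL * q = EL)
    (hER' : (∀ x ∈ closure {y : H | ∃ T ∈ (MR.commutant : Set (H →L[ℂ] H)), T Ω = y},
        ER' x = x) ∧
      ∀ x : H, ER' x ∈ closure {y : H | ∃ T ∈ (MR.commutant : Set (H →L[ℂ] H)), T Ω = y})
    (hEL' : (∀ x ∈ closure {y : H | ∃ T ∈ (ML.commutant : Set (H →L[ℂ] H)), T Ω = y},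
        EL' x = x) ∧
      ∀ x : H, EL' x ∈ closure {y : H | ∃ T ∈ (ML.commutant : Set (H →L[ℂ] H)), T Ω = y})
    (hcommLR : Commute EL' ER)
    (hP : P = ER * ER')
    (hsub : closure {y : H | ∃ T ∈ (MR.commutant : Set (H →L[ℂ] H)), ER (T Ω) = y} =
      closure {y : H | ∃ T ∈ (ML.commutant : Set (H →L[ℂ] H)), EL (T Ω) = y})
    (htotal : Dense {w : H | ∃ x ∈ (MR : Set (H →L[ℂ] H)),
      ∃ y ∈ (ML.commutant : Set (H →L[ℂ] H)), (x * y) Ω = w}) :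
    P = ER * EL := by
  classical
  -- notation for the various sets
  set DR : Set H := {y : H | ∃ T ∈ (MR.commutant : Set (H →L[ℂ] H)), T Ω = y} with hDR
  set DL : Set H := {y : H | ∃ T ∈ (ML.commutant : Set (H →L[ℂ] H)), T Ω = y} with hDL
  set SR : Set H := {y : H | ∃ T ∈ (MR.commutant : Set (H →L[ℂ] H)), ER (T Ω) = y} with hSR
  set SL : Set H := {y : H | ∃ T ∈ (ML.commutant : Set (H →L[ℂ] H)), EL (T Ω) = y} with hSL
  -- commutation of ER' with elements of MR'
  have hER'comm : ∀ S ∈ MR.commutant, ER' * S = S * ER' := by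
    intro S hSmem
    refine stmt15_comm_of_invariant ER' S (closure DR) hER'sa hER'.1 hER'.2 ?_ ?_
    · intro v hv
      have hmaps : Set.MapsTo S DR DR := by
        rintro _ ⟨T, hT, rfl⟩
        exact ⟨S * T, mul_mem hSmem hT, rfl⟩
      have := (hmaps.closure S.continuous) hv
      simpa using this
    · intro v hv
      have hmaps : Set.MapsTo ⇑(star S) DR DR := by
        rintro _ ⟨T, hT, rfl⟩
        exact ⟨star S * T, mul_mem (star_mem hSmem) hT, rfl⟩
      have := (hmaps.closure (star S).continuous) hv
      simpa using this
  have hEL'comm : ∀ S ∈ ML.commutant, EL' * S = S * EL' := by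
    intro S hSmem
    refine stmt15_comm_of_invariant EL' S (closure DL) hEL'sa hEL'.1 hEL'.2 ?_ ?_
    · intro v hv
      have hmaps : Set.MapsTo S DL DL := by
        rintro _ ⟨T, hT, rfl⟩
        exact ⟨S * T, mul_mem hSmem hT, rfl⟩
      have := (hmaps.closure S.continuous) hv
      simpa using this
    · intro v hv
      have hmaps : Set.MapsTo ⇑(star S) DL DL := by
        rintro _ ⟨T, hT, rfl⟩
        exact ⟨star S * T, mul_mem (star_mem hSmem) hT, rfl⟩
      have := (hmaps.closure (star S).continuous) hv
      simpa using this
  -- ER fixes closure SR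
  have hERfix : ∀ v ∈ closure SR, ER v = v := by
    refine stmt15_fixes_closure ER ?_
    rintro _ ⟨T, hT, rfl⟩
    have := congrArg (fun f : H →L[ℂ] H => f (T Ω)) hERidem
    simpa using this
  -- EL fixes closure SL
  have hELfix : ∀ v ∈ closure SL, EL v = v := by
    refine stmt15_fixes_closure EL ?_
    rintro _ ⟨T, hT, rfl⟩
    have := congrArg (fun f : H →L[ℂ] H => f (T Ω)) hELidem
    simpa using this
  -- P_R := ER * ER' fixes closure SR
  have hPRfix : ∀ v ∈ closure SR, (ER * ER') v = v := by
    refine stmt15_fixes_closure (ER * ER') ?_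
    rintro _ ⟨T, hT, rfl⟩
    have hmem : ER (T Ω) ∈ DR := ⟨ER * T, mul_mem hERmem hT, rfl⟩
    have h1 : ER' (ER (T Ω)) = ER (T Ω) := hER'.1 _ (subset_closure hmem)
    have h2 : ER (ER (T Ω)) = ER (T Ω) := by
      have := congrArg (fun f : H →L[ℂ] H => f (T Ω)) hERidem
      simpa using this
    simp only [ContinuousLinearMap.mul_apply, h1, h2]
  -- range of P_R lands in closure SR
  have hPRrng : ∀ v : H, (ER * ER') v ∈ closure SR := by
    intro v
    have hmaps : Set.MapsTo ER DR SR := by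
      rintro _ ⟨T, hT, rfl⟩
      exact ⟨T, hT, rfl⟩
    have h := (hmaps.closure ER.continuous) (hER'.2 v)
    simpa using h
  -- P_L := EL * EL' fixes closure SL
  have hPLfix : ∀ v ∈ closure SL, (EL * EL') v = v := by
    refine stmt15_fixes_closure (EL * EL') ?_
    rintro _ ⟨T, hT, rfl⟩
    have hmem : EL (T Ω) ∈ DL := ⟨EL * T, mul_mem hELmem hT, rfl⟩
    have h1 : EL' (EL (T Ω)) = EL (T Ω) := hEL'.1 _ (subset_closure hmem)
    have h2 : EL (EL (T Ω)) = EL (T Ω) := by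
      have := congrArg (fun f : H →L[ℂ] H => f (T Ω)) hELidem
      simpa using this
    simp only [ContinuousLinearMap.mul_apply, h1, h2]
  -- range of P_L lands in closure SL
  have hPLrng : ∀ v : H, (EL * EL') v ∈ closure SL := by
    intro v
    have hmaps : Set.MapsTo EL DL SL := by
      rintro _ ⟨T, hT, rfl⟩
      exact ⟨T, hT, rfl⟩
    have h := (hmaps.closure EL.continuous) (hEL'.2 v)
    simpa using h
  -- P_R and P_L are equal (both are the orthogonal projection onto closure SR = closure SL)
  have hPLsa : star (EL * EL') = EL * EL' := by
    rw [star_mul, hELsa, hEL'sa]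
    exact hEL'comm EL hELmem
  have hPRsa : star (ER * ER') = ER * ER' := by
    rw [star_mul, hERsa, hER'sa]
    exact hER'comm ER hERmem
  have h1 : (EL * EL') * (ER * ER') = ER * ER' := by
    ext v
    simp only [ContinuousLinearMap.mul_apply]
    have := hPLfix _ (hsub ▸ hPRrng v)
    simpa using this
  have h2 : (ER * ER') * (EL * EL') = EL * EL' := by
    ext v
    simp only [ContinuousLinearMap.mul_apply]
    have := hPRfix _ (hsub ▸ hPLrng v)
    simpa using this
  have hPRPL : ER * ER' = EL * EL' := by
    have h3 := congrArg star h1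
    rw [star_mul, hPRsa, hPLsa] at h3
    rw [← h3, h2]
  -- on the total set, EL * EL' agrees with ER * EL
  have hfinal : EL * EL' = ER * EL := by
    apply ContinuousLinearMap.coeFn_injective
    refine Continuous.ext_on htotal (EL * EL').continuous (ER * EL).continuous ?_
    rintro _ ⟨x, hx, y, hy, rfl⟩
    have hxL : x ∈ ML.commutant := by
      rw [VonNeumannAlgebra.mem_commutant_iff]
      exact fun g hg => (hcomm x hx g hg).symm
    have hxy : x * y ∈ ML.commutant := mul_mem hxL hy
    -- EL' fixes (x*y) Ω
    have hwD : (x * y) Ω ∈ DL := ⟨x * y, hxy, rfl⟩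
    have hEL'w : EL' ((x * y) Ω) = (x * y) Ω := hEL'.1 _ (subset_closure hwD)
    -- EL ((x*y) Ω) lies in closure SR, so ER fixes it
    have hELw : EL ((x * y) Ω) ∈ closure SL := subset_closure ⟨x * y, hxy, rfl⟩
    have hERELw : ER (EL ((x * y) Ω)) = EL ((x * y) Ω) := hERfix _ (hsub ▸ hELw)
    simp only [ContinuousLinearMap.mul_apply] at hEL'w hERELw ⊢
    rw [hEL'w, hERELw]
  rw [hP, hPRPL, hfinal]
end
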